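/- The Moser spindle has chromatic number 4. -/
import Mathlib

/-- The Moser spindle: vertices `{0,…,6}`, edges
`{01,02,12,13,23,34,45,35,46,56,06,16}`. -/
def moser : SimpleGraph (Fin 7) :=
  SimpleGraph.fromEdgeSet
    {s(0,1), s(0,2), s(1,2), s(1,3), s(2,3), s(3,4), s(4,5), s(3,5),
     s(4,6), s(5,6), s(0,6), s(1,6)}

lemma moser_adj (v w : Fin 7) : moser.Adj v w ↔
    (s(v,w) ∈ ({s(0,1), s(0,2), s(1,2), s(1,3), s(2,3), s(3,4), s(4,5), s(3,5),
     s(4,6), s(5,6), s(0,6), s(1,6)} : Set (Sym2 (Fin 7)))) ∧ v ≠ w := by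
  simp [moser, SimpleGraph.fromEdgeSet_adj]

lemma moser_colorable : moser.Colorable 4 := by
  refine ⟨SimpleGraph.Coloring.mk (fun v => ![0,1,2,0,1,2,3] v) ?_⟩
  intro v w h
  rw [moser_adj] at h
  obtain ⟨hm, -⟩ := h
  simp only [Set.mem_insert_iff, Set.mem_singleton_iff, Sym2.eq, Sym2.rel_iff',
    Prod.mk.injEq, Prod.swap_prod_mk] at hm
  rcases hm with (⟨h1,h2⟩|⟨h1,h2⟩)|(⟨h1,h2⟩|⟨h1,h2⟩)|(⟨h1,h2⟩|⟨h1,h2⟩)|(⟨h1,h2⟩|⟨h1,h2⟩)|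
    (⟨h1,h2⟩|⟨h1,h2⟩)|(⟨h1,h2⟩|⟨h1,h2⟩)|(⟨h1,h2⟩|⟨h1,h2⟩)|(⟨h1,h2⟩|⟨h1,h2⟩)|
    (⟨h1,h2⟩|⟨h1,h2⟩)|(⟨h1,h2⟩|⟨h1,h2⟩)|(⟨h1,h2⟩|⟨h1,h2⟩)|(⟨h1,h2⟩|⟨h1,h2⟩) <;>
    subst h1 <;> subst h2 <;> decide

lemma fin3_tip (x y b c : Fin 3) (h1 : x ≠ b) (h2 : x ≠ c) (h3 : y ≠ b)
    (h4 : y ≠ c) (h5 : b ≠ c) : x = y := by revert x y b c; decide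

lemma moser_not_three : ¬ moser.Colorable 3 := by
  rintro ⟨C⟩
  have adj : ∀ v w : Fin 7, (s(v,w) ∈ ({s(0,1), s(0,2), s(1,2), s(1,3), s(2,3), s(3,4), s(4,5),
      s(3,5), s(4,6), s(5,6), s(0,6), s(1,6)} : Set (Sym2 (Fin 7)))) → v ≠ w → C v ≠ C w := by
    intro v w hm hne
    exact C.valid ((moser_adj v w).mpr ⟨hm, hne⟩)
  have h01 := adj 0 1 (by simp) (by decide)
  have h02 := adj 0 2 (by simp) (by decide)
  have h12 := adj 1 2 (by simp) (by decide)
  have h13 := adj 1 3 (by simp) (by decide)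
  have h23 := adj 2 3 (by simp) (by decide)
  have h34 := adj 3 4 (by simp) (by decide)
  have h45 := adj 4 5 (by simp) (by decide)
  have h35 := adj 3 5 (by simp) (by decide)
  have h46 := adj 4 6 (by simp) (by decide)
  have h56 := adj 5 6 (by simp) (by decide)
  have h06 := adj 0 6 (by simp) (by decide)
  have e03 : C 0 = C 3 := fin3_tip _ _ _ _ h01 h02 (Ne.symm h13) (Ne.symm h23) h12
  have e36 : C 3 = C 6 := fin3_tip _ _ _ _ h34 h35 (Ne.symm h46) (Ne.symm h56) h45
  exact h06 (e03.trans e36)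

/-- The Moser spindle has chromatic number 4. -/
theorem moser_chromaticNumber : moser.chromaticNumber = 4 := by
  refine le_antisymm ?_ ?_
  · exact_mod_cast moser_colorable.chromaticNumber_le
  · by_contra h
    push_neg at h
    have h3 : moser.chromaticNumber ≤ 3 := by
      exact_mod_cast Order.le_of_lt_add_one (by exact_mod_cast h)
    exact moser_not_three (SimpleGraph.chromaticNumber_le_iff_colorable.mp (by exact_mod_cast h3))
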